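/- For every non-increasing probability distribution P = (p_1,...,p_n) on n ≥ 2 symbols satisfying the AUH constraints, the average length satisfies L(P) ≤ (f_{n+3} - 3)/f_{n+1}, where f_k are the Fibonacci numbers, and this bound is attained by the Fibonacci distribution. -/

import Mathlib

open Finset

/-- A non-increasing probability distribution on symbols `1,…,n` satisfying the
anti-uniform Huffman (AUH) constraints. -/
def IsAUH (n : ℕ) (p : ℕ → ℝ) : Prop :=
  (∀ i ∈ Finset.Icc 1 n, 0 ≤ p i) ∧
  (∀ i j, 1 ≤ i → i ≤ j → j ≤ n → p j ≤ p i) ∧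
  (∑ i ∈ Finset.Icc 1 n, p i = 1) ∧
  (∀ i, 1 ≤ i → i ≤ n - 2 → ∑ j ∈ Finset.Icc (i + 2) n, p j ≤ p i)

/-- Average length of the anti-uniform code on `n` symbols. -/
noncomputable def avgLen (n : ℕ) (p : ℕ → ℝ) : ℝ :=
  ∑ i ∈ Finset.Icc 1 (n - 1), (i : ℝ) * p i + ((n : ℝ) - 1) * p n

/-- The Fibonacci distribution on `n` symbols. -/
noncomputable def fibDist (n : ℕ) : ℕ → ℝ := fun i =>
  if i = n then (Nat.fib 2 : ℝ) / (Nat.fib (n + 1) : ℝ)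
  else (Nat.fib (n - i) : ℝ) / (Nat.fib (n + 1) : ℝ)


private lemma sum_Icc_bot {k n : ℕ} (h : k ≤ n) (f : ℕ → ℝ) :
    ∑ j ∈ Icc k n, f j = f k + ∑ j ∈ Icc (k+1) n, f j := by
  rw [show Icc k n = insert k (Icc (k+1) n) by ext x; simp; omega, Finset.sum_insert (by simp)]

/-- tail sum -/
private noncomputable def tl (n : ℕ) (p : ℕ → ℝ) (k : ℕ) : ℝ := ∑ j ∈ Icc k n, p j

private noncomputable def Ssum (n : ℕ) (p : ℕ → ℝ) (k : ℕ) : ℝ := ∑ i ∈ Icc k (n-1), tl n p i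

private lemma tl_succ {n k : ℕ} (p : ℕ → ℝ) (h : k ≤ n) : tl n p k = p k + tl n p (k+1) :=
  sum_Icc_bot h p

private lemma tl_empty {n k : ℕ} (p : ℕ → ℝ) (h : n < k) : tl n p k = 0 := by
  unfold tl
  rw [Finset.Icc_eq_empty (by omega)]; simp

private lemma tl_nonneg {n k : ℕ} {p : ℕ → ℝ} (hp : ∀ i ∈ Finset.Icc 1 n, 0 ≤ p i)
    (hk : 1 ≤ k) : 0 ≤ tl n p k := by
  apply Finset.sum_nonneg
  intro i hi
  simp at hi
  exact hp i (by simp; omega)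

/-- avgLen as sum of tails -/
private lemma avgLen_eq_Ssum (n : ℕ) (hn : 2 ≤ n) (p : ℕ → ℝ) :
    avgLen n p = Ssum n p 1 := by
  have key : ∀ m k : ℕ, k + m = n → 1 ≤ k →
      Ssum n p k = ∑ i ∈ Icc k (n-1), ((i:ℝ) - k + 1) * p i + (m:ℝ) * p n := by
    intro m
    induction m with
    | zero =>
      intro k hk _
      unfold Ssum
      rw [Finset.Icc_eq_empty (by omega)]
      simp
    | succ m ih =>
      intro k hk hk1
      have hkn : k ≤ n - 1 := by omega
      have hsplit : Ssum n p k = tl n p k + Ssum n p (k+1) := by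
        unfold Ssum; exact sum_Icc_bot hkn _
      have htl : tl n p k = (∑ i ∈ Icc k (n-1), p i) + p n := by
        unfold tl
        rw [show n = (n-1)+1 by omega]
        rw [Finset.sum_Icc_succ_top (by omega)]
        congr 1
      rw [hsplit, htl, ih (k+1) (by omega) (by omega)]
      rw [sum_Icc_bot hkn (fun i => ((i:ℝ) - k + 1) * p i), sum_Icc_bot hkn p]
      have : ∑ i ∈ Icc (k+1) (n-1), ((i:ℝ) - (k+1) + 1) * p i + ∑ i ∈ Icc (k+1) (n-1), p i
          = ∑ i ∈ Icc (k+1) (n-1), ((i:ℝ) - k + 1) * p i := by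
        rw [← Finset.sum_add_distrib]
        apply Finset.sum_congr rfl
        intro i _
        push_cast
        ring
      push_cast
      linarith [this]
  have := key (n-1) 1 (by omega) le_rfl
  rw [avgLen, this]
  have : ((n-1:ℕ):ℝ) = (n:ℝ) - 1 := by
    have : 1 ≤ n := by omega
    push_cast [this]; ring
  rw [this]
  congr 1
  apply Finset.sum_congr rfl
  intro i _
  push_cast
  ring
private lemma fib_cast_pos (k : ℕ) (h : 1 ≤ k) : (0:ℝ) < (Nat.fib k : ℝ) := by
  exact_mod_cast Nat.fib_pos.mpr (by omega)

private lemma fibDist_tailsum (n : ℕ) (hn : 2 ≤ n) :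
    ∀ m k : ℕ, k + m = n → 1 ≤ k →
      tl n (fibDist n) k = (Nat.fib (m+2) : ℝ) / (Nat.fib (n+1) : ℝ) := by
  intro m
  induction m with
  | zero =>
    intro k hk _
    have : k = n := by omega
    subst this
    unfold tl
    rw [Finset.Icc_self, Finset.sum_singleton, fibDist, if_pos rfl]
  | succ m ih =>
    intro k hk hk1
    rw [tl_succ _ (by omega), ih (k+1) (by omega) (by omega)]
    have hkn : k ≠ n := by omega
    have hnk : n - k = m + 1 := by omega
    rw [fibDist]
    simp only [if_neg hkn, hnk]
    rw [← add_div]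
    congr 1
    exact_mod_cast (Nat.fib_add_two (n := m+1)).symm

private lemma isAUH_fibDist (n : ℕ) (hn : 2 ≤ n) : IsAUH n (fibDist n) := by
  have hfpos : (0:ℝ) < (Nat.fib (n+1) : ℝ) := fib_cast_pos _ (by omega)
  refine ⟨?_, ?_, ?_, ?_⟩
  · intro i _
    unfold fibDist
    split <;> positivity
  · intro i j hi hij hjn
    unfold fibDist
    rcases eq_or_ne j n with rfl | hj
    · rcases eq_or_ne i j with rfl | hi'
      · simp
      · rw [if_pos rfl, if_neg hi']
        apply div_le_div_of_nonneg_right ?_ hfpos.le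
        exact_mod_cast Nat.fib_pos.mpr (by omega)
    · rw [if_neg hj, if_neg (by omega)]
      apply div_le_div_of_nonneg_right ?_ hfpos.le
      exact_mod_cast Nat.fib_mono (by omega)
  · have := fibDist_tailsum n hn (n-1) 1 (by omega) le_rfl
    unfold tl at this
    rw [this, show n-1+2 = n+1 by omega, div_self (ne_of_gt hfpos)]
  · intro i hi1 hi2
    have := fibDist_tailsum n hn (n-i-2) (i+2) (by omega) (by omega)
    unfold tl at this
    rw [this]
    rw [fibDist, if_neg (by omega), show n-i-2+2 = n-i by omega]
private lemma avgLen_fibDist (n : ℕ) (hn : 2 ≤ n) :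
    avgLen n (fibDist n) = ((Nat.fib (n + 3) : ℝ) - 3) / (Nat.fib (n + 1) : ℝ) := by
  have key : ∀ m k : ℕ, k + m = n → 1 ≤ k →
      Ssum n (fibDist n) k = ((Nat.fib (m+4) : ℝ) - 3) / (Nat.fib (n+1) : ℝ) := by
    intro m
    induction m with
    | zero =>
      intro k hk _
      unfold Ssum
      rw [Finset.Icc_eq_empty (by omega)]
      norm_num [Nat.fib]
    | succ m ih =>
      intro k hk hk1
      have hsplit : Ssum n (fibDist n) k = tl n (fibDist n) k + Ssum n (fibDist n) (k+1) := by
        unfold Ssum; exact sum_Icc_bot (by omega) _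
      rw [hsplit, ih (k+1) (by omega) (by omega),
        fibDist_tailsum n hn (m+1) k (by omega) hk1]
      rw [← add_div]
      congr 1
      have h1 : Nat.fib (m+5) = Nat.fib (m+3) + Nat.fib (m+4) := Nat.fib_add_two (n := m+3)
      push_cast [h1]
      ring
  rw [avgLen_eq_Ssum n hn, key (n-1) 1 (by omega) le_rfl, show n-1+4 = n+3 by omega]
private lemma Vnn (a m : ℕ) (ha : 1 ≤ a) (hm : 2 ≤ m) :
    0 ≤ (Nat.fib (a+m+2) : ℝ) - 3 * Nat.fib a + (-1:ℝ)^(a+1) * Nat.fib (m+2) := by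
  have hadd : (Nat.fib (a+m+2) : ℝ)
      = Nat.fib a * Nat.fib (m+1) + Nat.fib (a+1) * Nat.fib (m+2) := by
    have := Nat.fib_add a (m+1)
    rw [show a + (m+1) + 1 = a+m+2 by omega] at this
    exact_mod_cast this
  have hA : (1:ℝ) ≤ Nat.fib a := by exact_mod_cast Nat.fib_pos.mpr ha
  have hC : (Nat.fib a : ℝ) ≤ Nat.fib (a+1) := by exact_mod_cast Nat.fib_le_fib_succ
  have hD : (3:ℝ) ≤ Nat.fib (m+2) := by
    have : Nat.fib 4 ≤ Nat.fib (m+2) := Nat.fib_mono (by omega)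
    exact_mod_cast le_trans (by norm_num [Nat.fib]) this
  have hB0 : (0:ℝ) ≤ Nat.fib (m+1) := by positivity
  rcases Nat.even_or_odd a with he | ho
  · have hpow : (-1:ℝ)^(a+1) = -1 := (he.add_one).neg_one_pow
    rw [hpow, hadd]
    rcases Nat.lt_or_ge m 3 with hm2 | hm3
    · have : m = 2 := by omega
      subst this
      have h3 : (Nat.fib a : ℝ) + 1 ≤ Nat.fib (a+1) := by
        have ha2 : 2 ≤ a := by
          rcases Nat.eq_or_lt_of_le ha with h | h
          · exfalso; rw [← h] at he; simp [Nat.even_iff] at he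
          · omega
        have e1 : Nat.fib (a+1) = Nat.fib (a-1) + Nat.fib a := by
          have := Nat.fib_add_two (n := a-1)
          rw [show a-1+2 = a+1 by omega, show a-1+1 = a by omega] at this
          exact this
        have e2 : 1 ≤ Nat.fib (a-1) := Nat.fib_pos.mpr (by omega)
        have : Nat.fib a + 1 ≤ Nat.fib (a+1) := by omega
        exact_mod_cast this
      have f3 : (Nat.fib 3 : ℝ) = 2 := by norm_num [Nat.fib]
      have f4 : (Nat.fib 4 : ℝ) = 3 := by norm_num [Nat.fib]
      rw [f3, f4]
      nlinarith
    · have hB3 : (3:ℝ) ≤ Nat.fib (m+1) := by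
        have : Nat.fib 4 ≤ Nat.fib (m+1) := Nat.fib_mono (by omega)
        exact_mod_cast le_trans (by norm_num [Nat.fib]) this
      have hC1 : (1:ℝ) ≤ Nat.fib (a+1) := by linarith
      have p1 : 3 * (Nat.fib a : ℝ) ≤ Nat.fib a * Nat.fib (m+1) := by nlinarith
      have p2 : (Nat.fib (m+2) : ℝ) ≤ Nat.fib (a+1) * Nat.fib (m+2) := by nlinarith
      linarith
  · have hpow : (-1:ℝ)^(a+1) = 1 := (ho.add_one).neg_one_pow
    rw [hpow, hadd]
    have p1 : 3 * (Nat.fib a : ℝ) ≤ Nat.fib (a+1) * Nat.fib (m+2) := by nlinarith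
    have p2 : (0:ℝ) ≤ Nat.fib a * Nat.fib (m+1) := by positivity
    linarith
private lemma chain (n : ℕ) (p : ℕ → ℝ) (h : IsAUH n p) :
    ∀ m : ℕ, 2 ≤ m → ∀ a : ℕ, a + 1 + m = n →
      (Nat.fib (n+1) : ℝ) * Ssum n p (a+1) ≤
        (2 * (Nat.fib (n+1):ℝ) - 3 * Nat.fib (a+1) + (-1:ℝ)^a * Nat.fib (m+1)) * tl n p (a+1)
        + ((Nat.fib (n+1):ℝ) - 3 * Nat.fib a + (-1:ℝ)^(a+1) * Nat.fib (m+2)) * tl n p (a+2) := by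
  obtain ⟨hpos, hmono, hsum, hcon⟩ := h
  intro m hm
  induction m, hm using Nat.le_induction with
  | base =>
    intro a hn
    have hn3 : n = a + 3 := by omega
    subst hn3
    have hS : Ssum (a+3) p (a+1) = tl (a+3) p (a+1) + tl (a+3) p (a+2) := by
      unfold Ssum
      rw [show a+3-1 = a+2 by omega, sum_Icc_bot (by omega), Finset.Icc_self,
        Finset.sum_singleton]
    have ht1 : tl (a+3) p (a+1) = p (a+1) + tl (a+3) p (a+2) := tl_succ p (by omega)
    have ht2 : tl (a+3) p (a+2) = p (a+2) + tl (a+3) p (a+3) := tl_succ p (by omega)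
    have ht3 : tl (a+3) p (a+3) = p (a+3) + tl (a+3) p (a+4) := tl_succ p (by omega)
    have ht4 : tl (a+3) p (a+4) = 0 := tl_empty p (by omega)
    have hxy : p (a+2) ≤ p (a+1) := hmono (a+1) (a+2) (by omega) (by omega) (by omega)
    have hyz : p (a+3) ≤ p (a+2) := hmono (a+2) (a+3) (by omega) (by omega) (by omega)
    have hz : 0 ≤ p (a+3) := hpos (a+3) (by simp)
    have f2 : Nat.fib (a+2) = Nat.fib a + Nat.fib (a+1) := Nat.fib_add_two
    have f3 : Nat.fib (a+3) = Nat.fib (a+1) + Nat.fib (a+2) := Nat.fib_add_two (n := a+1)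
    have f4 : Nat.fib (a+4) = Nat.fib (a+2) + Nat.fib (a+3) := Nat.fib_add_two (n := a+2)
    have hfib : (Nat.fib (a+3+1):ℝ) = 2 * Nat.fib a + 3 * Nat.fib (a+1) := by
      rw [show a+3+1 = a+4 by omega]
      push_cast [f4, f3, f2]
      ring
    have hT : (0:ℝ) ≤ (Nat.fib a : ℝ) + (-1:ℝ)^a := by
      rcases Nat.even_or_odd a with he | ho
      · rw [he.neg_one_pow]
        positivity
      · rw [ho.neg_one_pow]
        have : (1:ℝ) ≤ Nat.fib a := by
          exact_mod_cast Nat.fib_pos.mpr (by rcases ho with ⟨c, hc⟩; omega)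
        linarith
    have hpow : (-1:ℝ)^(a+1) = -(-1:ℝ)^a := by ring
    have fv3 : (Nat.fib 3 : ℝ) = 2 := by norm_num [Nat.fib]
    have fv4 : (Nat.fib 4 : ℝ) = 3 := by norm_num [Nat.fib]
    rw [hS, ht1, ht2, ht3, ht4, hfib, hpow, show (2:ℕ)+1 = 3 from rfl,
      show (2:ℕ)+2 = 4 from rfl, fv3, fv4]
    nlinarith [mul_nonneg hT (by linarith : (0:ℝ) ≤ p (a+1) - p (a+2)),
      mul_nonneg hT (by linarith : (0:ℝ) ≤ p (a+1) - p (a+3))]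
  | succ m hm ih =>
    intro a hn
    have IH := ih (a+1) (by omega)
    have hV : (0:ℝ) ≤ (Nat.fib (n+1) : ℝ) - 3 * Nat.fib (a+1) + (-1:ℝ)^(a+1+1) * Nat.fib (m+2) := by
      have := Vnn (a+1) m (by omega) hm
      rwa [show a+1+m+2 = n+1 by omega] at this
    have hc : tl n p (a+3) ≤ tl n p (a+1) - tl n p (a+2) := by
      have h1 := hcon (a+1) (by omega) (by omega)
      have h2 : tl n p (a+1) = p (a+1) + tl n p (a+2) := tl_succ p (by omega)
      have h3 : (∑ j ∈ Finset.Icc (a+1+2) n, p j) = tl n p (a+3) := by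
        rw [show a+1+2 = a+3 by omega]; rfl
      rw [h3] at h1
      linarith
    have hS : Ssum n p (a+1) = tl n p (a+1) + Ssum n p (a+2) := by
      unfold Ssum; exact sum_Icc_bot (by omega) _
    have hstep : ((Nat.fib (n+1):ℝ) - 3 * Nat.fib (a+1) + (-1:ℝ)^(a+1+1) * Nat.fib (m+2))
          * tl n p (a+1+2)
        ≤ ((Nat.fib (n+1):ℝ) - 3 * Nat.fib (a+1) + (-1:ℝ)^(a+1+1) * Nat.fib (m+2))
          * (tl n p (a+1) - tl n p (a+2)) := by
      apply mul_le_mul_of_nonneg_left ?_ hV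
      rw [show a+1+2 = a+3 by omega]
      exact hc
    have hA2 : (Nat.fib (a+2):ℝ) = Nat.fib a + Nat.fib (a+1) := by
      exact_mod_cast Nat.fib_add_two
    have hM3 : (Nat.fib (m+3):ℝ) = Nat.fib (m+1) + Nat.fib (m+2) := by
      exact_mod_cast Nat.fib_add_two (n := m+1)
    rw [hS, show m+1+1 = m+2 by omega, show m+1+2 = m+3 by omega]
    have expand : (Nat.fib (n+1) : ℝ) * (tl n p (a+1) + Ssum n p (a+2))
        = (Nat.fib (n+1) : ℝ) * tl n p (a+1) + (Nat.fib (n+1) : ℝ) * Ssum n p (a+2) := by ring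
    rw [expand]
    calc (Nat.fib (n+1) : ℝ) * tl n p (a+1) + (Nat.fib (n+1) : ℝ) * Ssum n p (a+2)
        ≤ (Nat.fib (n+1) : ℝ) * tl n p (a+1)
          + ((2 * (Nat.fib (n+1):ℝ) - 3 * Nat.fib (a+1+1) + (-1:ℝ)^(a+1) * Nat.fib (m+1)) * tl n p (a+1+1)
          + ((Nat.fib (n+1):ℝ) - 3 * Nat.fib (a+1) + (-1:ℝ)^(a+1+1) * Nat.fib (m+2)) * tl n p (a+1+2)) := by
          linarith [IH]
      _ ≤ (Nat.fib (n+1) : ℝ) * tl n p (a+1)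
          + ((2 * (Nat.fib (n+1):ℝ) - 3 * Nat.fib (a+1+1) + (-1:ℝ)^(a+1) * Nat.fib (m+1)) * tl n p (a+2)
          + ((Nat.fib (n+1):ℝ) - 3 * Nat.fib (a+1) + (-1:ℝ)^(a+1+1) * Nat.fib (m+2))
            * (tl n p (a+1) - tl n p (a+2))) := by
          have : tl n p (a+1+1) = tl n p (a+2) := by rw [show a+1+1 = a+2 by omega]
          rw [this]
          linarith [hstep]
      _ = (2 * (Nat.fib (n+1):ℝ) - 3 * Nat.fib (a+1) + (-1:ℝ)^a * Nat.fib (m+2)) * tl n p (a+1)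
          + ((Nat.fib (n+1):ℝ) - 3 * Nat.fib a + (-1:ℝ)^(a+1) * Nat.fib (m+3)) * tl n p (a+2) := by
          rw [show a+1+1 = a+2 by omega, hA2, hM3]
          ring

/-- The average length of every AUH distribution on `n ≥ 2` symbols is at most
`(f (n+3) - 3) / f (n+1)`, and the Fibonacci distribution attains this bound. -/
theorem avgLen_le_max (n : ℕ) (hn : 2 ≤ n) :
    (∀ p : ℕ → ℝ, IsAUH n p →
      avgLen n p ≤ ((Nat.fib (n + 3) : ℝ) - 3) / (Nat.fib (n + 1) : ℝ)) ∧
    IsAUH n (fibDist n) ∧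
    avgLen n (fibDist n) = ((Nat.fib (n + 3) : ℝ) - 3) / (Nat.fib (n + 1) : ℝ) := by
  refine ⟨?_, isAUH_fibDist n hn, avgLen_fibDist n hn⟩
  intro p hp
  have hfpos : (0:ℝ) < (Nat.fib (n+1) : ℝ) := fib_cast_pos _ (by omega)
  rcases eq_or_lt_of_le hn with hn2 | hn3
  · -- n = 2
    subst hn2
    have hsum := hp.2.2.1
    have h12 : (∑ i ∈ Finset.Icc 1 2, p i) = p 1 + p 2 := by
      rw [show (2:ℕ) = 1 + 1 from rfl, Finset.sum_Icc_succ_top (by omega), Finset.Icc_self,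
        Finset.sum_singleton]
    have hfib5 : (Nat.fib 5 : ℝ) = 5 := by norm_num [Nat.fib]
    have hfib3 : (Nat.fib 3 : ℝ) = 2 := by norm_num [Nat.fib]
    have : avgLen 2 p = 1 := by
      rw [avgLen]
      simp only [show (2:ℕ)-1 = 1 from rfl, Finset.Icc_self, Finset.sum_singleton]
      rw [h12] at hsum
      push_cast
      linarith
    rw [this, show (2:ℕ)+3 = 5 from rfl, show (2:ℕ)+1 = 3 from rfl, hfib5, hfib3]
    norm_num
  · -- 3 ≤ n
    have hn3' : 3 ≤ n := hn3
    have hchain := chain n p hp (n-1) (by omega) 0 (by omega)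
    simp only [zero_add] at hchain
    rw [show n-1+1 = n by omega, show n-1+2 = n+1 by omega] at hchain
    have htl1 : tl n p 1 = 1 := hp.2.2.1
    rw [htl1] at hchain
    have hfib1 : (Nat.fib 1 : ℝ) = 1 := by norm_num [Nat.fib]
    have hfib0 : (Nat.fib 0 : ℝ) = 0 := by norm_num [Nat.fib]
    rw [hfib1, hfib0] at hchain
    have hf3 : (Nat.fib (n+3):ℝ) = 2 * Nat.fib (n+1) + Nat.fib n := by
      have a1 : Nat.fib (n+3) = Nat.fib (n+1) + Nat.fib (n+2) := Nat.fib_add_two (n := n+1)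
      have a2 : Nat.fib (n+2) = Nat.fib n + Nat.fib (n+1) := Nat.fib_add_two
      push_cast [a1, a2]
      ring
    rw [avgLen_eq_Ssum n hn p, le_div_iff₀ hfpos]
    norm_num at hchain
    nlinarith [hchain]
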